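/- Fix a positive integer k. Let A₁, …, A_k ⊆ ℕ₀² be finite and non-empty, and choose an integer m > k · max{a : (a, y) ∈ A_i or (x, a) ∈ A_i for some 1 ≤ i ≤ k and some x, y} (m exceeds k times the largest coordinate appearing in any A_i). Let C = A₁ + m·A₂ + m²·A₃ + ⋯ + m^{k−1}·A_k, where m^j·A denotes scalar dilation by m^j. Then |sC − dC| = ∏_{j=1}^{k} |sA_j − dA_j| for all non-negative integers s, d with 1 ≤ s + d ≤ k. -/

import Mathlib

open Pointwise

/-- The `n`-fold iterated sumset: `iterSum 0 A = {0}`, `iterSum (n+1) A = A + iterSum n A`. -/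
def iterSum {G : Type*} [AddCommGroup G] [DecidableEq G] : ℕ → Finset G → Finset G
  | 0, _ => {0}
  | n + 1, A => A + iterSum n A

/-- `sdSet s d A` is the generalized sumset `sA - dA`. -/
def sdSet {G : Type*} [AddCommGroup G] [DecidableEq G] (s d : ℕ) (A : Finset G) : Finset G :=
  iterSum s A - iterSum d A

section Aux

variable {G H : Type*} [AddCommGroup G] [DecidableEq G] [AddCommGroup H] [DecidableEq H]

lemma iterSum_add (n : ℕ) (X Y : Finset G) :
    iterSum n (X + Y) = iterSum n X + iterSum n Y := by
  induction n with
  | zero =>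
      show ({0} : Finset G) = {0} + {0}
      rw [Finset.singleton_add_singleton, add_zero]
  | succ n ih =>
      show (X + Y) + iterSum n (X + Y) = (X + iterSum n X) + (Y + iterSum n Y)
      rw [ih, add_add_add_comm]

lemma iterSum_singleton_zero (n : ℕ) : iterSum n ({0} : Finset G) = {0} := by
  induction n with
  | zero => rfl
  | succ n ih =>
      show ({0} : Finset G) + iterSum n {0} = {0}
      rw [ih, Finset.singleton_add_singleton, add_zero]

lemma sdSet_singleton_zero (s d : ℕ) : sdSet s d ({0} : Finset G) = {0} := by
  unfold sdSet
  rw [iterSum_singleton_zero, iterSum_singleton_zero, Finset.singleton_sub_singleton, sub_zero]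

lemma sdSet_add (s d : ℕ) (X Y : Finset G) :
    sdSet s d (X + Y) = sdSet s d X + sdSet s d Y := by
  unfold sdSet
  rw [iterSum_add, iterSum_add]
  ext x
  simp only [Finset.mem_sub, Finset.mem_add]
  constructor
  · rintro ⟨u, ⟨p, hp, q, hq, rfl⟩, v, ⟨r, hr, t, ht, rfl⟩, rfl⟩
    exact ⟨p - r, ⟨p, hp, r, hr, rfl⟩, q - t, ⟨q, hq, t, ht, rfl⟩, by abel⟩
  · rintro ⟨a, ⟨p, hp, r, hr, rfl⟩, b, ⟨q, hq, t, ht, rfl⟩, rfl⟩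
    exact ⟨p + q, ⟨p, hp, q, hq, rfl⟩, r + t, ⟨r, hr, t, ht, rfl⟩, by abel⟩

lemma sdSet_sum {ι : Type*} (s d : ℕ) (I : Finset ι) (T : ι → Finset G) :
    sdSet s d (∑ i ∈ I, T i) = ∑ i ∈ I, sdSet s d (T i) := by
  classical
  induction I using Finset.induction_on with
  | empty =>
      rw [Finset.sum_empty, Finset.sum_empty]
      exact sdSet_singleton_zero s d
  | insert _ _ h ih =>
      rw [Finset.sum_insert h, Finset.sum_insert h, sdSet_add, ih]

lemma iterSum_image (φ : G →+ H) (n : ℕ) (B : Finset G) :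
    iterSum n (B.image ⇑φ) = (iterSum n B).image ⇑φ := by
  induction n with
  | zero =>
      show ({0} : Finset H) = ({0} : Finset G).image ⇑φ
      rw [Finset.image_singleton, map_zero]
  | succ n ih =>
      show B.image ⇑φ + iterSum n (B.image ⇑φ) = ((B + iterSum n B).image ⇑φ)
      rw [ih, Finset.image_add]

lemma sdSet_image (φ : G →+ H) (s d : ℕ) (B : Finset G) :
    sdSet s d (B.image ⇑φ) = (sdSet s d B).image ⇑φ := by
  unfold sdSet
  rw [iterSum_image, iterSum_image]
  ext x
  simp only [Finset.mem_image, Finset.mem_sub]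
  constructor
  · rintro ⟨a, ⟨u, hu, rfl⟩, b, ⟨v, hv, rfl⟩, rfl⟩
    exact ⟨u - v, ⟨u, hu, v, hv, rfl⟩, map_sub φ u v⟩
  · rintro ⟨a, ⟨u, hu, v, hv, rfl⟩, rfl⟩
    exact ⟨φ u, ⟨u, hu, rfl⟩, φ v, ⟨v, hv, rfl⟩, (map_sub φ u v).symm⟩

lemma sum_eq_image_piFinset {ι : Type*} [Fintype ι] [DecidableEq ι] (S : ι → Finset G) :
    ∑ i, S i = (Fintype.piFinset S).image (fun g => ∑ i, g i) := by
  ext x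
  simp only [Finset.mem_image, Fintype.mem_piFinset]
  rw [← Finset.mem_coe, Finset.coe_sum, Set.mem_fintype_sum]
  constructor
  · rintro ⟨g, hg, rfl⟩; exact ⟨g, fun i => hg i, rfl⟩
  · rintro ⟨g, hg, rfl⟩; exact ⟨g, fun i => hg i, rfl⟩

lemma digits_zero (m : ℤ) (hm : 0 < m) :
    ∀ (k : ℕ) (z : Fin k → ℤ), (∀ i, |z i| < m) → (∑ i : Fin k, m ^ (i : ℕ) * z i) = 0 → ∀ i, z i = 0 := by
  intro k
  induction k with
  | zero => exact fun z _ _ i => i.elim0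
  | succ n ih =>
      intro z hz hsum i
      have hsplit : ∑ j : Fin (n + 1), m ^ (j : ℕ) * z j
          = z 0 + m * ∑ j : Fin n, m ^ (j : ℕ) * z j.succ := by
        rw [Fin.sum_univ_succ, Finset.mul_sum]
        simp only [Fin.val_zero, pow_zero, one_mul, Fin.val_succ, pow_succ]
        congr 1
        exact Finset.sum_congr rfl fun j _ => by ring
      rw [hsplit] at hsum
      have hz0 : z 0 = 0 := by
        have hdvd : m ∣ z 0 := ⟨-∑ j : Fin n, m ^ (j : ℕ) * z j.succ, by linarith⟩
        exact Int.eq_zero_of_abs_lt_dvd hdvd (hz 0)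
      rw [hz0, zero_add] at hsum
      have hS : ∑ j : Fin n, m ^ (j : ℕ) * z j.succ = 0 :=
        (mul_eq_zero.mp hsum).resolve_left hm.ne'
      have hrest := ih (fun j => z j.succ) (fun j => hz j.succ) hS
      rcases Fin.eq_zero_or_eq_succ i with rfl | ⟨j, rfl⟩
      · exact hz0
      · exact hrest j

lemma iterSum_bound (K M : ℤ) (hM : 0 ≤ M) (B : Finset (ℤ × ℤ))
    (hB : ∀ p ∈ B, 0 ≤ K * p.1 ∧ 0 ≤ K * p.2 ∧ K * p.1 ≤ M ∧ K * p.2 ≤ M) :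
    ∀ n, ∀ p ∈ iterSum n B,
      0 ≤ K * p.1 ∧ 0 ≤ K * p.2 ∧ K * p.1 ≤ (n : ℤ) * M ∧ K * p.2 ≤ (n : ℤ) * M := by
  intro n
  induction n with
  | zero =>
      intro p hp
      have hp0 : p = 0 := Finset.mem_singleton.mp hp
      subst hp0
      simp
  | succ n ih =>
      intro p hp
      obtain ⟨a, ha, q, hq, rfl⟩ := Finset.mem_add.mp hp
      obtain ⟨h1, h2, h3, h4⟩ := hB a ha
      obtain ⟨g1, g2, g3, g4⟩ := ih q hq
      have e1 : (a + q).1 = a.1 + q.1 := rfl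
      have e2 : (a + q).2 = a.2 + q.2 := rfl
      rw [e1, e2, mul_add, mul_add]
      push_cast
      refine ⟨by linarith, by linarith, by linarith, by linarith⟩

lemma sdSet_bound (K M : ℤ) (hM : 0 ≤ M) (B : Finset (ℤ × ℤ))
    (hB : ∀ p ∈ B, 0 ≤ K * p.1 ∧ 0 ≤ K * p.2 ∧ K * p.1 ≤ M ∧ K * p.2 ≤ M) (s d : ℕ) :
    ∀ q ∈ sdSet s d B,
      -((d : ℤ) * M) ≤ K * q.1 ∧ K * q.1 ≤ (s : ℤ) * M ∧
      -((d : ℤ) * M) ≤ K * q.2 ∧ K * q.2 ≤ (s : ℤ) * M := by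
  intro q hq
  obtain ⟨u, hu, v, hv, rfl⟩ := Finset.mem_sub.mp hq
  obtain ⟨u1, u2, u3, u4⟩ := iterSum_bound K M hM B hB s u hu
  obtain ⟨v1, v2, v3, v4⟩ := iterSum_bound K M hM B hB d v hv
  have e1 : (u - v).1 = u.1 - v.1 := rfl
  have e2 : (u - v).2 = u.2 - v.2 := rfl
  rw [e1, e2, mul_sub, mul_sub]
  refine ⟨by linarith, by linarith, by linarith, by linarith⟩

end Aux

theorem stmt7 (k : ℕ) (hk : 0 < k) (A : Fin k → Finset (ℤ × ℤ))
    (hA : ∀ i, (A i).Nonempty)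
    (hAnn : ∀ i, ∀ p ∈ A i, 0 ≤ p.1 ∧ 0 ≤ p.2)
    (m : ℤ) (hm : ∀ i, ∀ p ∈ A i, (k : ℤ) * p.1 < m ∧ (k : ℤ) * p.2 < m)
    (C : Finset (ℤ × ℤ))
    (hC : C = ∑ i : Fin k, (A i).image (fun p => (m ^ (i : ℕ) * p.1, m ^ (i : ℕ) * p.2))) :
    ∀ s d : ℕ, 1 ≤ s + d → s + d ≤ k →
      (sdSet s d C).card = ∏ i : Fin k, (sdSet s d (A i)).card := by
  intro s d _hsd1 hsdk
  have hm0 : (0 : ℤ) < m := by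
    obtain ⟨p, hp⟩ := hA ⟨0, hk⟩
    have h1 := (hAnn _ p hp).1
    have h2 := (hm _ p hp).1
    have h3 : (0 : ℤ) ≤ (k : ℤ) * p.1 := mul_nonneg (by positivity) h1
    linarith
  set φ : Fin k → (ℤ × ℤ) →+ (ℤ × ℤ) := fun i =>
    (AddMonoidHom.mulLeft (m ^ (i : ℕ))).prodMap (AddMonoidHom.mulLeft (m ^ (i : ℕ))) with hφ
  have hCim : C = ∑ i, (A i).image ⇑(φ i) := hC
  -- bounds hypothesis for each A i
  have hBnd : ∀ i : Fin k, ∀ p ∈ A i,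
      0 ≤ (k : ℤ) * p.1 ∧ 0 ≤ (k : ℤ) * p.2 ∧ (k : ℤ) * p.1 ≤ m - 1 ∧ (k : ℤ) * p.2 ≤ m - 1 := by
    intro i p hp
    obtain ⟨h1, h2⟩ := hAnn i p hp
    obtain ⟨h3, h4⟩ := hm i p hp
    have hk0 : (0 : ℤ) ≤ (k : ℤ) := by positivity
    exact ⟨mul_nonneg hk0 h1, mul_nonneg hk0 h2, by linarith, by linarith⟩
  have hM : (0 : ℤ) ≤ m - 1 := by linarith
  -- the key injectivity
  have hdiff : ∀ i : Fin k, ∀ q ∈ sdSet s d (A i), ∀ q' ∈ sdSet s d (A i),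
      |q.1 - q'.1| < m ∧ |q.2 - q'.2| < m := by
    intro i q hq q' hq'
    obtain ⟨b1, b2, b3, b4⟩ := sdSet_bound (k : ℤ) (m - 1) hM (A i) (hBnd i) s d q hq
    obtain ⟨c1, c2, c3, c4⟩ := sdSet_bound (k : ℤ) (m - 1) hM (A i) (hBnd i) s d q' hq'
    have hsd : (s : ℤ) + (d : ℤ) ≤ (k : ℤ) := by exact_mod_cast hsdk
    have hk0 : (0 : ℤ) < (k : ℤ) := by exact_mod_cast hk
    have key : ∀ x y : ℤ, -((d : ℤ) * (m - 1)) ≤ x → x ≤ (s : ℤ) * (m - 1) →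
        -((d : ℤ) * (m - 1)) ≤ y → y ≤ (s : ℤ) * (m - 1) → x - y < (k : ℤ) * m := by
      intro x y hx1 hx2 hy1 hy2
      have : x - y ≤ ((s : ℤ) + d) * (m - 1) := by ring_nf; linarith
      have h2 : ((s : ℤ) + d) * (m - 1) ≤ (k : ℤ) * (m - 1) := by
        apply mul_le_mul_of_nonneg_right hsd hM
      nlinarith
    constructor
    · rw [abs_lt]
      constructor
      · have := key ((k:ℤ)*q'.1) ((k:ℤ)*q.1) c1 c2 b1 b2
        have h5 : (k : ℤ) * (-(q.1 - q'.1)) < (k : ℤ) * m := by ring_nf at this ⊢; linarith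
        have := lt_of_mul_lt_mul_left h5 hk0.le
        linarith
      · have := key ((k:ℤ)*q.1) ((k:ℤ)*q'.1) b1 b2 c1 c2
        have h5 : (k : ℤ) * (q.1 - q'.1) < (k : ℤ) * m := by ring_nf at this ⊢; linarith
        exact lt_of_mul_lt_mul_left h5 hk0.le
    · rw [abs_lt]
      constructor
      · have := key ((k:ℤ)*q'.2) ((k:ℤ)*q.2) c3 c4 b3 b4
        have h5 : (k : ℤ) * (-(q.2 - q'.2)) < (k : ℤ) * m := by ring_nf at this ⊢; linarith
        have := lt_of_mul_lt_mul_left h5 hk0.le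
        linarith
      · have := key ((k:ℤ)*q.2) ((k:ℤ)*q'.2) b3 b4 c3 c4
        have h5 : (k : ℤ) * (q.2 - q'.2) < (k : ℤ) * m := by ring_nf at this ⊢; linarith
        exact lt_of_mul_lt_mul_left h5 hk0.le
  have hinj : Set.InjOn ((fun g : Fin k → ℤ × ℤ => ∑ i, g i) ∘ fun (b : Fin k → ℤ × ℤ) a => φ a (b a))
      ↑(Fintype.piFinset fun i => sdSet s d (A i)) := by
    intro g hg h hh heq
    simp only [Finset.mem_coe, Fintype.mem_piFinset] at hg hh
    have heq' : ∑ i, φ i (g i) = ∑ i, φ i (h i) := heq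
    have efst : ∀ (i : Fin k) (x : ℤ × ℤ), (φ i x).1 = m ^ (i : ℕ) * x.1 := fun i x => rfl
    have esnd : ∀ (i : Fin k) (x : ℤ × ℤ), (φ i x).2 = m ^ (i : ℕ) * x.2 := fun i x => rfl
    have h1 : ∑ i : Fin k, m ^ (i : ℕ) * ((g i).1 - (h i).1) = 0 := by
      have hfst := congrArg Prod.fst heq'
      rw [Prod.fst_sum, Prod.fst_sum] at hfst
      calc ∑ i : Fin k, m ^ (i : ℕ) * ((g i).1 - (h i).1)
          = ∑ i, ((φ i (g i)).1 - (φ i (h i)).1) := by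
            refine Finset.sum_congr rfl fun i _ => ?_
            rw [efst, efst]; ring
        _ = (∑ i, (φ i (g i)).1) - ∑ i, (φ i (h i)).1 := Finset.sum_sub_distrib _ _
        _ = 0 := by rw [hfst, sub_self]
    have h2 : ∑ i : Fin k, m ^ (i : ℕ) * ((g i).2 - (h i).2) = 0 := by
      have hsnd := congrArg Prod.snd heq'
      rw [Prod.snd_sum, Prod.snd_sum] at hsnd
      calc ∑ i : Fin k, m ^ (i : ℕ) * ((g i).2 - (h i).2)
          = ∑ i, ((φ i (g i)).2 - (φ i (h i)).2) := by
            refine Finset.sum_congr rfl fun i _ => ?_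
            rw [esnd, esnd]; ring
        _ = (∑ i, (φ i (g i)).2) - ∑ i, (φ i (h i)).2 := Finset.sum_sub_distrib _ _
        _ = 0 := by rw [hsnd, sub_self]
    have hz1 := digits_zero m hm0 k (fun i => (g i).1 - (h i).1)
      (fun i => ((hdiff i (g i) (hg i) (h i) (hh i)).1)) h1
    have hz2 := digits_zero m hm0 k (fun i => (g i).2 - (h i).2)
      (fun i => ((hdiff i (g i) (hg i) (h i) (hh i)).2)) h2
    funext i
    have e1 := sub_eq_zero.mp (hz1 i)
    have e2 := sub_eq_zero.mp (hz2 i)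
    exact Prod.ext e1 e2
  rw [hCim, sdSet_sum]
  have h2 : (∑ i, sdSet s d ((A i).image ⇑(φ i))) = ∑ i, (sdSet s d (A i)).image ⇑(φ i) :=
    Finset.sum_congr rfl fun i _ => sdSet_image (φ i) s d (A i)
  rw [h2, sum_eq_image_piFinset, Fintype.piFinset_image, Finset.image_image,
    Finset.card_image_of_injOn hinj, Fintype.card_piFinset]
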